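/- The (n−1)² matrices {e^{(p)}_{(j,k)} : j, k ∈ [n−1]} form a basis of the real vector space {X an n×n real matrix : X1 = 0 and pX = 0}, where 1 is the all-ones column vector and p acts as a row vector; in particular, each e^{(p)}_{(j,k)} satisfies e^{(p)}_{(j,k)}1 = 0 and p·e^{(p)}_{(j,k)} = 0, the family is linearly independent, and this subspace has dimension (n−1)². -/

import Mathlib

open Matrix

/-- The ratio `r_j := p_j / p_n` for `j ∈ [n-1]`, with the state space `[n]` modeled as
`Fin (m+1)`, the last state `n` as `Fin.last m`, and `[n-1]` as `Fin m` via `Fin.castSucc`. -/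
noncomputable def r (m : ℕ) (p : Fin (m + 1) → ℝ) (j : Fin m) : ℝ :=
  p j.castSucc / p (Fin.last m)

/-- `e^{(p)}_{(j,k)} := (e_j − r_j e_n)(e_k^T − e_n^T)` as an `(m+1) × (m+1)` real matrix. -/
noncomputable def Ep (m : ℕ) (p : Fin (m + 1) → ℝ) (j k : Fin m) :
    Matrix (Fin (m + 1)) (Fin (m + 1)) ℝ :=
  Matrix.vecMulVec
    (fun a => (if a = j.castSucc then (1 : ℝ) else 0) -
      r m p j * (if a = Fin.last m then (1 : ℝ) else 0))
    (fun b => (if b = k.castSucc then (1 : ℝ) else 0) - (if b = Fin.last m then (1 : ℝ) else 0))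

/-- The subspace of real `(m+1) × (m+1)` matrices `X` with `X1 = 0` (vanishing row sums)
and `pX = 0` (`p` acting as a row vector). -/
def annih (m : ℕ) (p : Fin (m + 1) → ℝ) :
    Submodule ℝ (Matrix (Fin (m + 1)) (Fin (m + 1)) ℝ) where
  carrier := {X | X.mulVec (fun _ => (1 : ℝ)) = 0 ∧ Matrix.vecMul p X = 0}
  add_mem' := by
    intro a b ha hb
    simp only [Set.mem_setOf_eq] at ha hb ⊢
    constructor
    · simp [Matrix.add_mulVec, ha.1, hb.1]
    · simp [Matrix.vecMul_add, ha.2, hb.2]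
  zero_mem' := by
    simp only [Set.mem_setOf_eq]
    constructor <;> simp
  smul_mem' := by
    intro c a ha
    simp only [Set.mem_setOf_eq] at ha ⊢
    constructor
    · simp [Matrix.smul_mulVec, ha.1]
    · have h : Matrix.vecMul p (c • a) = c • Matrix.vecMul p a := by
        ext b
        simp [Matrix.vecMul, dotProduct, Finset.mul_sum, mul_left_comm]
      rw [h, ha.2, smul_zero]

/-- the `(n−1)²` matrices `e^{(p)}_{(j,k)}`, `j, k ∈ [n−1]`, form a basis of
`{X : X1 = 0 and pX = 0}`; in particular each lies in that subspace, the family is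
linearly independent, it spans, and the subspace has dimension `(n−1)²`. -/
theorem stmt5 (m : ℕ) (hm : 1 ≤ m) (p : Fin (m + 1) → ℝ)
    (hp : ∀ a, 0 < p a) (hsum : ∑ a, p a = 1) :
    (∀ j k : Fin m, Ep m p j k ∈ annih m p) ∧
    LinearIndependent ℝ (fun jk : Fin m × Fin m => Ep m p jk.1 jk.2) ∧
    Submodule.span ℝ (Set.range (fun jk : Fin m × Fin m => Ep m p jk.1 jk.2)) = annih m p ∧
    Module.finrank ℝ (annih m p) = m * m := by
  have hpn : p (Fin.last m) ≠ 0 := (hp _).ne'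
  -- entry formula
  have hEp : ∀ (j k : Fin m) (a b : Fin (m + 1)),
      Ep m p j k a b = ((if a = j.castSucc then (1 : ℝ) else 0) -
        r m p j * (if a = Fin.last m then (1 : ℝ) else 0)) *
        ((if b = k.castSucc then (1 : ℝ) else 0) -
          (if b = Fin.last m then (1 : ℝ) else 0)) := fun _ _ _ _ => rfl
  have hcs : ∀ i : Fin m, i.castSucc ≠ Fin.last m := fun i => (Fin.castSucc_lt_last i).ne
  -- membership
  have hmem : ∀ j k : Fin m, Ep m p j k ∈ annih m p := by
    intro j k
    constructor
    · ext a
      simp only [Matrix.mulVec, dotProduct, hEp, mul_one, Pi.zero_apply]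
      rw [← Finset.mul_sum, Finset.sum_sub_distrib]
      simp [Finset.sum_ite_eq']
    · ext b
      simp only [Matrix.vecMul, dotProduct, hEp, Pi.zero_apply]
      have : ∀ a : Fin (m + 1), p a * (((if a = j.castSucc then (1 : ℝ) else 0) -
          r m p j * (if a = Fin.last m then (1 : ℝ) else 0)) *
          ((if b = k.castSucc then (1 : ℝ) else 0) -
            (if b = Fin.last m then (1 : ℝ) else 0))) =
          (p a * ((if a = j.castSucc then (1 : ℝ) else 0) -
          r m p j * (if a = Fin.last m then (1 : ℝ) else 0))) *
          ((if b = k.castSucc then (1 : ℝ) else 0) -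
            (if b = Fin.last m then (1 : ℝ) else 0)) := fun a => by ring
      rw [Finset.sum_congr rfl (fun a _ => this a), ← Finset.sum_mul]
      have hz : ∑ a : Fin (m + 1), p a * ((if a = j.castSucc then (1 : ℝ) else 0) -
          r m p j * (if a = Fin.last m then (1 : ℝ) else 0)) = 0 := by
        have : ∀ a : Fin (m + 1), p a * ((if a = j.castSucc then (1 : ℝ) else 0) -
            r m p j * (if a = Fin.last m then (1 : ℝ) else 0)) =
            (if a = j.castSucc then p a else 0) -
              r m p j * (if a = Fin.last m then p a else 0) := fun a => by
          split_ifs <;> ring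
        rw [Finset.sum_congr rfl (fun a _ => this a), Finset.sum_sub_distrib,
          ← Finset.mul_sum]
        simp [Finset.sum_ite_eq', r, div_mul_cancel₀ _ hpn]
      rw [hz, zero_mul]
  -- the coefficient representation: any X in annih equals the canonical combination
  have hrep : ∀ X ∈ annih m p,
      X = ∑ jk : Fin m × Fin m,
        X jk.1.castSucc jk.2.castSucc • Ep m p jk.1 jk.2 := by
    intro X hX
    obtain ⟨h1, h2⟩ := hX
    have hrow : ∀ i : Fin m, X i.castSucc (Fin.last m) =
        -∑ k : Fin m, X i.castSucc k.castSucc := by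
      intro i
      have := congrFun h1 i.castSucc
      simp only [Matrix.mulVec, dotProduct, mul_one, Pi.zero_apply] at this
      rw [Fin.sum_univ_castSucc] at this
      linarith
    have hcol : ∀ l : Fin (m + 1), X (Fin.last m) l =
        -∑ j : Fin m, r m p j * X j.castSucc l := by
      intro l
      have := congrFun h2 l
      simp only [Matrix.vecMul, dotProduct, Pi.zero_apply] at this
      rw [Fin.sum_univ_castSucc] at this
      have h3 : X (Fin.last m) l =
          -(∑ j : Fin m, p j.castSucc * X j.castSucc l) / p (Fin.last m) := by
        field_simp
        linarith
      rw [h3, neg_div, Finset.sum_div]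
      congr 1
      exact Finset.sum_congr rfl fun j _ => by rw [r]; ring
    ext a b
    rw [Matrix.sum_apply]
    simp only [Matrix.smul_apply, smul_eq_mul, hEp]
    rw [Fintype.sum_prod_type]
    induction a using Fin.lastCases with
    | last =>
      induction b using Fin.lastCases with
      | last =>
        have key : ∀ j k : Fin m, X j.castSucc k.castSucc *
            (((if Fin.last m = j.castSucc then (1:ℝ) else 0) -
              r m p j * (if Fin.last m = Fin.last m then (1:ℝ) else 0)) *
            ((if Fin.last m = k.castSucc then (1:ℝ) else 0) -
              (if Fin.last m = Fin.last m then (1:ℝ) else 0)))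
            = r m p j * X j.castSucc k.castSucc := by
          intro j k
          rw [if_neg (Ne.symm (hcs j)), if_neg (Ne.symm (hcs k)), if_pos rfl]
          ring
        rw [Finset.sum_congr rfl fun j _ => Finset.sum_congr rfl fun k _ => key j k,
          hcol (Fin.last m), ← Finset.sum_neg_distrib]
        refine Finset.sum_congr rfl fun j _ => ?_
        rw [hrow j, ← Finset.mul_sum]
        ring
      | cast l =>
        have key : ∀ j k : Fin m, X j.castSucc k.castSucc *
            (((if Fin.last m = j.castSucc then (1:ℝ) else 0) -
              r m p j * (if Fin.last m = Fin.last m then (1:ℝ) else 0)) *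
            ((if l.castSucc = k.castSucc then (1:ℝ) else 0) -
              (if l.castSucc = Fin.last m then (1:ℝ) else 0)))
            = (if l = k then -(r m p j * X j.castSucc k.castSucc) else 0) := by
          intro j k
          rw [if_neg (Ne.symm (hcs j)), if_pos rfl, if_neg (hcs l)]
          simp only [Fin.castSucc_inj]
          split_ifs <;> ring
        rw [Finset.sum_congr rfl fun j _ => Finset.sum_congr rfl fun k _ => key j k,
          Finset.sum_congr rfl fun j _ => Finset.sum_ite_eq Finset.univ l
            (fun k => -(r m p j * X j.castSucc k.castSucc))]
        simp only [Finset.mem_univ, if_true]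
        rw [hcol l.castSucc, ← Finset.sum_neg_distrib]
    | cast i =>
      induction b using Fin.lastCases with
      | last =>
        have key : ∀ j k : Fin m, X j.castSucc k.castSucc *
            (((if i.castSucc = j.castSucc then (1:ℝ) else 0) -
              r m p j * (if i.castSucc = Fin.last m then (1:ℝ) else 0)) *
            ((if Fin.last m = k.castSucc then (1:ℝ) else 0) -
              (if Fin.last m = Fin.last m then (1:ℝ) else 0)))
            = (if i = j then -X j.castSucc k.castSucc else 0) := by
          intro j k
          rw [if_neg (hcs i), if_pos rfl, if_neg (Ne.symm (hcs k))]
          simp only [Fin.castSucc_inj]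
          split_ifs <;> ring
        have inner : ∀ j : Fin m,
            (∑ k : Fin m, if i = j then -X j.castSucc k.castSucc else 0) =
            (if i = j then -∑ k : Fin m, X j.castSucc k.castSucc else 0) := by
          intro j
          split_ifs
          · rw [← Finset.sum_neg_distrib]
          · simp
        rw [Finset.sum_congr rfl fun j _ => Finset.sum_congr rfl fun k _ => key j k,
          Finset.sum_congr rfl fun j _ => inner j,
          Finset.sum_ite_eq Finset.univ i
            (fun j => -∑ k : Fin m, X j.castSucc k.castSucc)]
        simp only [Finset.mem_univ, if_true]
        exact hrow i
      | cast l =>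
        have key : ∀ j k : Fin m, X j.castSucc k.castSucc *
            (((if i.castSucc = j.castSucc then (1:ℝ) else 0) -
              r m p j * (if i.castSucc = Fin.last m then (1:ℝ) else 0)) *
            ((if l.castSucc = k.castSucc then (1:ℝ) else 0) -
              (if l.castSucc = Fin.last m then (1:ℝ) else 0)))
            = (if i = j then (if l = k then X j.castSucc k.castSucc else 0) else 0) := by
          intro j k
          rw [if_neg (hcs i), if_neg (hcs l)]
          simp only [Fin.castSucc_inj]
          split_ifs <;> ring
        have inner : ∀ j : Fin m,
            (∑ k : Fin m, if i = j then (if l = k then X j.castSucc k.castSucc else 0) else 0) =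
            (if i = j then X j.castSucc l.castSucc else 0) := by
          intro j
          split_ifs
          · rw [Finset.sum_ite_eq Finset.univ l]
            simp
          · simp
        rw [Finset.sum_congr rfl fun j _ => Finset.sum_congr rfl fun k _ => key j k,
          Finset.sum_congr rfl fun j _ => inner j,
          Finset.sum_ite_eq Finset.univ i (fun j => X j.castSucc l.castSucc)]
        simp
  -- linear independence
  have hli : LinearIndependent ℝ (fun jk : Fin m × Fin m => Ep m p jk.1 jk.2) := by
    rw [Fintype.linearIndependent_iff]
    intro g hg jk
    have h0 := congrFun (congrFun hg jk.1.castSucc) jk.2.castSucc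
    rw [Matrix.sum_apply] at h0
    simp only [Matrix.smul_apply, smul_eq_mul, hEp, Matrix.zero_apply] at h0
    rw [Fintype.sum_prod_type] at h0
    have key : ∀ j k : Fin m, g (j, k) *
        (((if jk.1.castSucc = j.castSucc then (1:ℝ) else 0) -
          r m p j * (if jk.1.castSucc = Fin.last m then (1:ℝ) else 0)) *
        ((if jk.2.castSucc = k.castSucc then (1:ℝ) else 0) -
          (if jk.2.castSucc = Fin.last m then (1:ℝ) else 0)))
        = (if jk.1 = j then (if jk.2 = k then g (j, k) else 0) else 0) := by
      intro j k
      rw [if_neg (hcs jk.1), if_neg (hcs jk.2)]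
      simp only [Fin.castSucc_inj]
      split_ifs <;> ring
    have inner : ∀ j : Fin m,
        (∑ k : Fin m, if jk.1 = j then (if jk.2 = k then g (j, k) else 0) else 0) =
        (if jk.1 = j then g (j, jk.2) else 0) := by
      intro j
      split_ifs
      · rw [Finset.sum_ite_eq Finset.univ jk.2]
        simp
      · simp
    rw [Finset.sum_congr rfl fun j _ => Finset.sum_congr rfl fun k _ => key j k,
      Finset.sum_congr rfl fun j _ => inner j,
      Finset.sum_ite_eq Finset.univ jk.1 (fun j => g (j, jk.2))] at h0
    simpa using h0
  -- span
  have hspan : Submodule.span ℝ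
      (Set.range (fun jk : Fin m × Fin m => Ep m p jk.1 jk.2)) = annih m p := by
    apply le_antisymm
    · rw [Submodule.span_le]
      rintro _ ⟨jk, rfl⟩
      exact hmem jk.1 jk.2
    · intro X hX
      rw [hrep X hX]
      exact Submodule.sum_mem _ fun jk _ =>
        Submodule.smul_mem _ _ (Submodule.subset_span ⟨jk, rfl⟩)
  refine ⟨hmem, hli, hspan, ?_⟩
  rw [← hspan, finrank_span_eq_card hli]
  simp
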